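/- Let X be a diagonal d × d complex matrix. Then there exists a diagonal matrix D with D² = 1 such that ‖D − X‖ ≤ (1 + 1/√2)·‖X² − 1‖, where ‖T‖ = √(tr(T*T)/d) is the normalized Hilbert–Schmidt norm. -/

import Mathlib

open Matrix

noncomputable def normHS {n : Type*} [Fintype n] (A : Matrix n n ℂ) : ℝ :=
  Real.sqrt ((Matrix.trace (Aᴴ * A)).re / Fintype.card n)

lemma scalar_key (z : ℂ) :
    ‖(if 0 ≤ z.re then (1:ℂ) else -1) - z‖ ≤ ‖z ^ 2 - 1‖ := by
  have h : z ^ 2 - 1 = (z - 1) * (z + 1) := by ring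
  rw [h, norm_mul]
  split_ifs with hz
  · have h1 : (1:ℝ) ≤ ‖z + 1‖ := by
      have := Complex.abs_re_le_norm (z + 1)
      have hre : (z + 1).re = z.re + 1 := by simp
      rw [hre] at this
      have : z.re + 1 ≤ ‖z + 1‖ := le_trans (le_abs_self _) this
      linarith
    calc ‖1 - z‖ = ‖z - 1‖ := norm_sub_rev _ _
      _ = ‖z - 1‖ * 1 := (mul_one _).symm
      _ ≤ ‖z - 1‖ * ‖z + 1‖ :=
          mul_le_mul_of_nonneg_left h1 (norm_nonneg _)
  · have h1 : (1:ℝ) ≤ ‖z - 1‖ := by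
      have := Complex.abs_re_le_norm (z - 1)
      have hre : (z - 1).re = z.re - 1 := by simp
      rw [hre] at this
      have h2 : 1 - z.re ≤ |z.re - 1| := by
        rw [abs_sub_comm]; exact le_abs_self _
      linarith
    calc ‖-1 - z‖ = ‖z + 1‖ := by
          rw [show (-1 : ℂ) - z = -(z + 1) by ring, norm_neg]
      _ = 1 * ‖z + 1‖ := (one_mul _).symm
      _ ≤ ‖z - 1‖ * ‖z + 1‖ :=
          mul_le_mul_of_nonneg_right h1 (norm_nonneg _)

lemma trace_re_eq {d : ℕ} (A : Matrix (Fin d) (Fin d) ℂ) :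
    (Matrix.trace (Aᴴ * A)).re = ∑ i, ∑ j, Complex.normSq (A j i) := by
  simp only [Matrix.trace, Matrix.diag, Matrix.mul_apply, Matrix.conjTranspose_apply]
  rw [Complex.re_sum]
  refine Finset.sum_congr rfl fun i _ => ?_
  rw [Complex.re_sum]
  refine Finset.sum_congr rfl fun j _ => ?_
  rw [Complex.normSq_apply, Complex.mul_re]
  simp [Complex.conj_re, Complex.conj_im]
  try ring

theorem stmt_2 (d : ℕ) (X : Matrix (Fin d) (Fin d) ℂ) (hX : X.IsDiag) :
    ∃ D : Matrix (Fin d) (Fin d) ℂ, D.IsDiag ∧ D ^ 2 = 1 ∧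
      normHS (D - X) ≤ (1 + 1 / Real.sqrt 2) * normHS (X ^ 2 - 1) := by
  set e : Fin d → ℂ := fun i => if 0 ≤ (X i i).re then (1:ℂ) else -1 with he
  refine ⟨Matrix.diagonal e, Matrix.isDiag_diagonal e, ?_, ?_⟩
  · rw [pow_two, Matrix.diagonal_mul_diagonal]
    have : (fun i => e i * e i) = fun _ => (1:ℂ) := by
      funext i
      simp only [he]
      split_ifs <;> norm_num
    rw [this, Matrix.diagonal_one]
  · have hAB : normHS (Matrix.diagonal e - X) ≤ normHS (X ^ 2 - 1) := by
      unfold normHS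
      apply Real.sqrt_le_sqrt
      have hcard : (0:ℝ) ≤ (Fintype.card (Fin d) : ℝ)⁻¹ := by positivity
      rw [div_eq_mul_inv, div_eq_mul_inv]
      apply mul_le_mul_of_nonneg_right _ hcard
      rw [trace_re_eq, trace_re_eq]
      apply Finset.sum_le_sum
      intro i _
      apply Finset.sum_le_sum
      intro j _
      by_cases hij : j = i
      · subst hij
        have hd : (Matrix.diagonal e - X) j j = e j - X j j := by
          simp [Matrix.diagonal_apply_eq]
        have hd2 : (X ^ 2 - 1 : Matrix (Fin d) (Fin d) ℂ) j j = (X j j) ^ 2 - 1 := by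
          have : (X ^ 2) j j = X j j * X j j := by
            rw [pow_two, Matrix.mul_apply]
            rw [Finset.sum_eq_single j]
            · intro b _ hb
              rw [hX hb.symm, zero_mul]
            · intro h; exact absurd (Finset.mem_univ j) h
          rw [Matrix.sub_apply, Matrix.one_apply_eq, this, ← pow_two]
        rw [hd, hd2]
        have := scalar_key (X j j)
        have h1 : Complex.normSq (e j - X j j) = (‖e j - X j j‖) ^ 2 :=
          (Complex.sq_norm _).symm
        have h2 : Complex.normSq ((X j j) ^ 2 - 1) = (‖(X j j) ^ 2 - 1‖) ^ 2 :=
          (Complex.sq_norm _).symm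
        rw [h1, h2]
        exact pow_le_pow_left₀ (norm_nonneg _) this 2
      · have hz1 : (Matrix.diagonal e - X) j i = 0 := by
          simp [Matrix.sub_apply, Matrix.diagonal_apply_ne _ hij, hX hij]
        have hz2 : (X ^ 2 - 1 : Matrix (Fin d) (Fin d) ℂ) j i = 0 := by
          have hsq : (X ^ 2) j i = 0 := by
            rw [pow_two, Matrix.mul_apply]
            apply Finset.sum_eq_zero
            intro b _
            by_cases hb : j = b
            · subst hb; rw [hX hij, mul_zero]
            · rw [hX hb, zero_mul]
          simp [Matrix.sub_apply, hsq, Matrix.one_apply_ne hij]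
        rw [hz1, hz2]
    have hnn : 0 ≤ normHS (X ^ 2 - 1) := Real.sqrt_nonneg _
    have hc : (1:ℝ) ≤ 1 + 1 / Real.sqrt 2 := by
      have : 0 < Real.sqrt 2 := by positivity
      have : 0 ≤ 1 / Real.sqrt 2 := by positivity
      linarith
    calc normHS (Matrix.diagonal e - X) ≤ normHS (X ^ 2 - 1) := hAB
      _ = 1 * normHS (X ^ 2 - 1) := (one_mul _).symm
      _ ≤ (1 + 1 / Real.sqrt 2) * normHS (X ^ 2 - 1) :=
          mul_le_mul_of_nonneg_right hc hnn
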